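/- Let {P_s : s ∈ Γ} be a projectional skeleton in a Banach space X. Then there exists a closed cofinal subset Γ' ⊆ Γ such that sup{‖P_s‖ : s ∈ Γ'} < +∞. -/

import Mathlib

/-- A projectional skeleton in a Banach space `X`: a family of bounded projections
`P s`, indexed by an up-directed partial order `Γ`, such that `X = ⋃ₛ im (P s)`,
each image is separable, `P s = P s ∘ P t = P t ∘ P s` for `s ≤ t`, and every
increasing sequence has a supremum `t` with `im (P t) = closure (⋃ₙ im (P sₙ))`. -/
structure ProjSkeleton (X : Type*) [NormedAddCommGroup X] [NormedSpace ℝ X]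
    (Γ : Type*) [PartialOrder Γ] where
  P : Γ → X →L[ℝ] X
  directed : ∀ s t : Γ, ∃ u, s ≤ u ∧ t ≤ u
  idem : ∀ s, (P s).comp (P s) = P s
  covers : ∀ x : X, ∃ s, P s x = x
  sep : ∀ s, TopologicalSpace.IsSeparable (Set.range (P s))
  comp_of_le : ∀ s t, s ≤ t → (P s).comp (P t) = P s ∧ (P t).comp (P s) = P s
  lub_exists : ∀ u : ℕ → Γ, StrictMono u → ∃ t, IsLUB (Set.range u) t
  range_lub : ∀ u : ℕ → Γ, StrictMono u → ∀ t, IsLUB (Set.range u) t →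
    Set.range (P t) = closure (⋃ n, Set.range (P (u n)))

/-- every projectional skeleton admits a closed cofinal subset on
which the projections are uniformly bounded. -/
theorem statement2 {X : Type*} [NormedAddCommGroup X] [NormedSpace ℝ X] [CompleteSpace X]
    {Γ : Type*} [PartialOrder Γ] (S : ProjSkeleton X Γ) :
    ∃ Γ' : Set Γ,
      (∀ u : ℕ → Γ, StrictMono u → (∀ n, u n ∈ Γ') →
        ∀ t, IsLUB (Set.range u) t → t ∈ Γ') ∧
      (∀ s : Γ, ∃ t ∈ Γ', s ≤ t) ∧
      ∃ C : ℝ, ∀ s ∈ Γ', ‖S.P s‖ ≤ C := by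
  classical
  -- Key closedness lemma: uniform bound passes to the LUB
  have closed_lemma : ∀ (C : ℝ) (u : ℕ → Γ), StrictMono u → (∀ n, ‖S.P (u n)‖ ≤ C) →
      ∀ t, IsLUB (Set.range u) t → ‖S.P t‖ ≤ C := by
    intro C u hu hb t ht
    have hC0 : 0 ≤ C := le_trans (norm_nonneg _) (hb 0)
    refine ContinuousLinearMap.opNorm_le_bound _ hC0 fun x => ?_
    set y := S.P t x with hy
    have hmem : y ∈ closure (⋃ n, Set.range (S.P (u n))) := by
      rw [← S.range_lub u hu t ht]; exact ⟨x, rfl⟩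
    have hulet : ∀ n, u n ≤ t := fun n => ht.1 ⟨n, rfl⟩
    have hPy : ∀ n, S.P (u n) y = S.P (u n) x := by
      intro n
      have hcomp := (S.comp_of_le (u n) t (hulet n)).1
      calc S.P (u n) y = ((S.P (u n)).comp (S.P t)) x := rfl
        _ = S.P (u n) x := by rw [hcomp]
    refine le_of_forall_pos_le_add fun ε hε => ?_
    have hC1 : (0:ℝ) < C + 1 := by linarith
    have hε' : 0 < ε / (C + 1) := div_pos hε hC1
    rw [Metric.mem_closure_iff] at hmem
    obtain ⟨z, hz, hdz⟩ := hmem (ε / (C + 1)) hε'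
    obtain ⟨sn, ⟨m, rfl⟩, w, hw⟩ := hz
    have hzz : S.P (u m) z = z := by
      rw [← hw]
      exact DFunLike.congr_fun (S.idem (u m)) w
    have hdz' : ‖y - z‖ < ε / (C + 1) := by rwa [dist_eq_norm] at hdz
    have h1 : ‖S.P (u m) (y - z)‖ ≤ C * (ε / (C + 1)) := by
      calc ‖S.P (u m) (y - z)‖ ≤ ‖S.P (u m)‖ * ‖y - z‖ := (S.P (u m)).le_opNorm _
        _ ≤ C * (ε / (C + 1)) :=
            mul_le_mul (hb m) hdz'.le (norm_nonneg _) hC0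
    have hz2 : z = S.P (u m) x - S.P (u m) (y - z) := by
      rw [map_sub, hPy m, hzz]; abel
    have h2 : ‖z‖ ≤ C * ‖x‖ + C * (ε / (C + 1)) := by
      rw [hz2]
      refine le_trans (norm_sub_le _ _) (add_le_add ?_ h1)
      calc ‖S.P (u m) x‖ ≤ ‖S.P (u m)‖ * ‖x‖ := (S.P (u m)).le_opNorm _
        _ ≤ C * ‖x‖ := mul_le_mul_of_nonneg_right (hb m) (norm_nonneg _)
    have h3 : ‖y‖ ≤ ‖y - z‖ + ‖z‖ := by
      have := norm_add_le (y - z) z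
      simpa using this
    have hsum : C * (ε / (C + 1)) + ε / (C + 1) = ε := by
      field_simp
    linarith
  -- Find a uniform bound on a cofinal set
  have key : ∃ C : ℝ, ∀ s : Γ, ∃ t, s ≤ t ∧ ‖S.P t‖ ≤ C := by
    by_contra h
    push_neg at h
    choose f hf using h
    choose g hg1 hg2 using S.directed
    set v : ℕ → Γ :=
      fun n => Nat.rec (f 0) (fun n vn => g vn (f (max (n : ℝ) ‖S.P vn‖))) n with hv
    have h1 : ∀ n, v n ≤ v (n + 1) := fun n => hg1 _ _
    have h2 : ∀ n : ℕ, f (max (n : ℝ) ‖S.P (v n)‖) ≤ v (n + 1) := fun n => hg2 _ _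
    have h3 : ∀ n : ℕ, max (n : ℝ) ‖S.P (v n)‖ < ‖S.P (v (n + 1))‖ := fun n => hf _ _ (h2 n)
    have hmono : StrictMono v := by
      apply strictMono_nat_of_lt_succ
      intro n
      refine lt_of_le_of_ne (h1 n) fun he => ?_
      have h4 := h3 n
      rw [← he] at h4
      exact absurd (le_max_right (n : ℝ) _) (not_le.mpr h4)
    obtain ⟨t, ht⟩ := S.lub_exists v hmono
    obtain ⟨n, hn⟩ := exists_nat_gt ‖S.P t‖
    have hle : v (n + 1) ≤ t := ht.1 ⟨n + 1, rfl⟩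
    have h5 := hf _ t (le_trans (h2 n) hle)
    have h6 : (n : ℝ) < ‖S.P t‖ := lt_of_le_of_lt (le_max_left _ _) h5
    linarith
  obtain ⟨C, hC⟩ := key
  refine ⟨{s | ‖S.P s‖ ≤ C}, ?_, ?_, C, fun s hs => hs⟩
  · intro u hu hmem t ht
    exact closed_lemma C u hu hmem t ht
  · intro s
    obtain ⟨t, hst, htC⟩ := hC s
    exact ⟨t, htC, hst⟩
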